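/- Let L > 0, λ̃ > 0 and let g : [0,L] → ℝ be continuous. If z : ℝ → ℝ is three times continuously differentiable on [0,L], satisfies z(0) = z(L) = 0 and z′(L) = 0, and satisfies λ̃·z(x) + z″′(x) + z′(x) = g(x) for all x ∈ [0,L], then λ̃ · ‖z‖_{L²(0,L)} ≤ ‖g‖_{L²(0,L)}. -/

import Mathlib

/-- If `z` is three times continuously differentiable on `[0,L]`, satisfies
`z(0) = z(L) = z′(L) = 0` and `λ̃ z + z″′ + z′ = g` on `[0,L]` with `g`
continuous and `λ̃ > 0`, then `λ̃ ‖z‖_{L²(0,L)} ≤ ‖g‖_{L²(0,L)}`. -/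
theorem kdv_resolvent_L2_bound (L lam : ℝ) (hL : 0 < L) (hlam : 0 < lam)
    (g : ℝ → ℝ) (hg : ContinuousOn g (Set.Icc 0 L))
    (z z₁ z₂ z₃ : ℝ → ℝ)
    (hz₁ : ∀ x ∈ Set.Icc (0:ℝ) L, HasDerivWithinAt z (z₁ x) (Set.Icc 0 L) x)
    (hz₂ : ∀ x ∈ Set.Icc (0:ℝ) L, HasDerivWithinAt z₁ (z₂ x) (Set.Icc 0 L) x)
    (hz₃ : ∀ x ∈ Set.Icc (0:ℝ) L, HasDerivWithinAt z₂ (z₃ x) (Set.Icc 0 L) x)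
    (hz₃cont : ContinuousOn z₃ (Set.Icc 0 L))
    (hbc0 : z 0 = 0) (hbcL : z L = 0) (hbc1 : z₁ L = 0)
    (heq : ∀ x ∈ Set.Icc (0:ℝ) L, lam * z x + z₃ x + z₁ x = g x) :
    lam * Real.sqrt (∫ x in (0:ℝ)..L, (z x)^2)
      ≤ Real.sqrt (∫ x in (0:ℝ)..L, (g x)^2) := by
  have huIcc : Set.uIcc (0:ℝ) L = Set.Icc 0 L := Set.uIcc_of_le hL.le
  have hzc : ContinuousOn z (Set.Icc 0 L) := fun x hx => (hz₁ x hx).continuousWithinAt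
  have hz1c : ContinuousOn z₁ (Set.Icc 0 L) := fun x hx => (hz₂ x hx).continuousWithinAt
  have hz2c : ContinuousOn z₂ (Set.Icc 0 L) := fun x hx => (hz₃ x hx).continuousWithinAt
  have intOf : ∀ {f : ℝ → ℝ}, ContinuousOn f (Set.Icc 0 L) →
      IntervalIntegrable f MeasureTheory.volume 0 L := fun hf =>
    (hf.mono (by rw [huIcc])).intervalIntegrable
  -- the key FTC identity
  set F : ℝ → ℝ := fun x => z x * z₂ x - (z₁ x)^2 / 2 + (z x)^2 / 2 with hF
  have hFderiv : ∀ x ∈ Set.Icc (0:ℝ) L,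
      HasDerivWithinAt F ((z₃ x + z₁ x) * z x) (Set.Icc 0 L) x := by
    intro x hx
    have h := (((hz₁ x hx).mul (hz₃ x hx)).sub
        ((((hz₂ x hx).pow 2)).div_const 2)).add (((hz₁ x hx).pow 2).div_const 2)
    refine h.congr_deriv ?_
    rw [show (2:ℕ) - 1 = 1 from rfl]; push_cast; ring
  have hIF : (∫ x in (0:ℝ)..L, (z₃ x + z₁ x) * z x) = F L - F 0 := by
    apply intervalIntegral.integral_eq_sub_of_hasDeriv_right_of_le hL.le
    · exact fun x hx => ((hFderiv x hx).continuousWithinAt)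
    · intro x hx
      exact ((hFderiv x (Set.mem_Icc_of_Ioo hx)).hasDerivAt
        (Icc_mem_nhds hx.1 hx.2)).hasDerivWithinAt
    · exact intOf (((hz₃cont.add hz1c).mul hzc))
  have hFL : F L = 0 := by simp [hF, hbcL, hbc1]
  have hF0 : F 0 = -(z₁ 0)^2 / 2 := by simp [hF, hbc0]; ring
  have hIFval : (∫ x in (0:ℝ)..L, (z₃ x + z₁ x) * z x) = (z₁ 0)^2 / 2 := by
    rw [hIF, hFL, hF0]; ring
  -- the basic energy identity: ∫ g z = lam ∫ z² + ∫ (z₃+z₁) z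
  have hgz : (∫ x in (0:ℝ)..L, g x * z x)
      = lam * (∫ x in (0:ℝ)..L, (z x)^2) + (∫ x in (0:ℝ)..L, (z₃ x + z₁ x) * z x) := by
    have h1 : (∫ x in (0:ℝ)..L, g x * z x)
        = ∫ x in (0:ℝ)..L, (lam * (z x)^2 + (z₃ x + z₁ x) * z x) := by
      apply intervalIntegral.integral_congr
      intro x hx
      rw [huIcc] at hx
      have := heq x hx
      simp only
      rw [← this]; ring
    rw [h1, intervalIntegral.integral_add (f := fun x => lam * (z x)^2)
      (g := fun x => (z₃ x + z₁ x) * z x)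
      ((intOf ((hzc.pow 2))).const_mul lam) (intOf (((hz₃cont.add hz1c).mul hzc))),
      intervalIntegral.integral_const_mul]
  set A := ∫ x in (0:ℝ)..L, (z x)^2 with hA
  set B := ∫ x in (0:ℝ)..L, (g x)^2 with hB
  set I := ∫ x in (0:ℝ)..L, g x * z x with hI
  have hAnn : 0 ≤ A := intervalIntegral.integral_nonneg hL.le (fun u _ => sq_nonneg _)
  have hBnn : 0 ≤ B := intervalIntegral.integral_nonneg hL.le (fun u _ => sq_nonneg _)
  have hlamA : lam * A ≤ I := by
    rw [hgz, hIFval]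
    nlinarith [sq_nonneg (z₁ 0)]
  rcases eq_or_lt_of_le hAnn with hA0 | hApos
  · rw [← hA0, Real.sqrt_zero, mul_zero]
    exact Real.sqrt_nonneg _
  -- Cauchy–Schwarz via the discriminant trick with t = I / A
  have hCS : I^2 ≤ B * A := by
    have hnn : 0 ≤ ∫ x in (0:ℝ)..L, (g x - (I/A) * z x)^2 :=
      intervalIntegral.integral_nonneg hL.le (fun u _ => sq_nonneg _)
    have hexp : (∫ x in (0:ℝ)..L, (g x - (I/A) * z x)^2)
        = B - 2 * (I/A) * I + (I/A)^2 * A := by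
      have h1 : (∫ x in (0:ℝ)..L, (g x - (I/A) * z x)^2)
          = ∫ x in (0:ℝ)..L, ((g x)^2 - 2 * (I/A) * (g x * z x) + (I/A)^2 * (z x)^2) := by
        apply intervalIntegral.integral_congr
        intro x hx; ring
      rw [h1, intervalIntegral.integral_add
          (f := fun x => (g x)^2 - 2 * (I/A) * (g x * z x)) (g := fun x => (I/A)^2 * (z x)^2)
          (((intOf (hg.pow 2)).sub (((intOf (hg.mul hzc))).const_mul _)))
          ((intOf (hzc.pow 2)).const_mul _),
        intervalIntegral.integral_sub (f := fun x => (g x)^2)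
          (g := fun x => 2 * (I/A) * (g x * z x)) (intOf (hg.pow 2))
          (((intOf (hg.mul hzc))).const_mul _),
        intervalIntegral.integral_const_mul, intervalIntegral.integral_const_mul]
    rw [hexp] at hnn
    have hAne : A ≠ 0 := ne_of_gt hApos
    have h3 : 0 ≤ B - I^2 / A := by
      have h2 : 2 * (I/A) * I - (I/A)^2 * A = I^2 / A := by field_simp; ring
      nlinarith [hnn]
    have h4 : I^2 / A * A = I^2 := div_mul_cancel₀ _ hAne
    nlinarith [h3, hApos, h4]
  have hIle : I ≤ Real.sqrt B * Real.sqrt A := by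
    have hInn : 0 ≤ I := le_trans (by positivity) hlamA
    calc I = Real.sqrt (I^2) := (Real.sqrt_sq hInn).symm
      _ ≤ Real.sqrt (B * A) := Real.sqrt_le_sqrt hCS
      _ = Real.sqrt B * Real.sqrt A := Real.sqrt_mul hBnn A
  have hsA : Real.sqrt A > 0 := Real.sqrt_pos.mpr hApos
  have key : lam * Real.sqrt A * Real.sqrt A ≤ Real.sqrt B * Real.sqrt A := by
    have : Real.sqrt A * Real.sqrt A = A := Real.mul_self_sqrt hAnn
    nlinarith [hlamA, hIle]
  exact le_of_mul_le_mul_right key hsA
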